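/- A satisfaction system Λ = (L, 𝔐, ⊨) is reception-compatible (i.e., FRsups(Mod(B) ∪ M, Λ) ≠ ∅ for every finite B ⊆ L and every M ⊆ 𝔐) if and only if for every M ⊆ 𝔐 either (i) M ∈ FRsets(Λ), or (ii) M has an immediate successor in the poset (FRsets(Λ) ∪ {M}, ⊊), or (iii) there is no M' ∈ FRsets(Λ) with M' ⊆ M. -/
import Mathlib


variable {α β : Type*}

def ModelsOf (sat : β → Set α → Prop) (B : Set α) : Set β := {m | sat m B}

def FRsets (sat : β → Set α → Prop) : Set (Set β) :=
  {X | ∃ B : Set α, B.Finite ∧ ModelsOf sat B = X}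

def FRsubs (sat : β → Set α → Prop) (M : Set β) : Set (Set β) :=
  {X | X ∈ FRsets sat ∧ X ⊆ M ∧ ¬ ∃ Y ∈ FRsets sat, X ⊂ Y ∧ Y ⊆ M}

def FRsups (sat : β → Set α → Prop) (M : Set β) : Set (Set β) :=
  {X | X ∈ FRsets sat ∧ M ⊆ X ∧ ¬ ∃ Y ∈ FRsets sat, M ⊆ Y ∧ Y ⊂ X}

theorem stmt7 (sat : β → Set α → Prop) :
    (∀ (B : Set α) (M : Set β), B.Finite →
        (FRsups sat (ModelsOf sat B ∪ M)).Nonempty) ↔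
      ∀ M : Set β,
        M ∈ FRsets sat ∨
        (∃ X ∈ FRsets sat ∪ {M}, M ⊂ X ∧
          ¬ ∃ Z ∈ FRsets sat ∪ {M}, M ⊂ Z ∧ Z ⊂ X) ∨
        ¬ ∃ M' ∈ FRsets sat, M' ⊆ M := by
  constructor
  · intro h M
    by_cases hM : M ∈ FRsets sat
    · exact Or.inl hM
    by_cases hM' : ∃ M' ∈ FRsets sat, M' ⊆ M
    · obtain ⟨M', ⟨B, hB, hBM⟩, hsub⟩ := hM'
      have hunion : ModelsOf sat B ∪ M = M := by
        rw [hBM]; exact Set.union_eq_self_of_subset_left hsub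
      obtain ⟨X, hXfr, hMX, hmin⟩ := h B M hB
      rw [hunion] at hMX hmin
      refine Or.inr (Or.inl ⟨X, Or.inl hXfr, ⟨hMX, fun he => hM ((le_antisymm hMX he).symm ▸ hXfr)⟩, ?_⟩)
      rintro ⟨Z, hZ, hMZ, hZX⟩
      rcases hZ with hZ | hZ
      · exact hmin ⟨Z, hZ, hMZ.subset, hZX⟩
      · exact hMZ.ne (Set.mem_singleton_iff.mp hZ).symm
    · exact Or.inr (Or.inr hM')
  · intro h B M hB
    set N := ModelsOf sat B ∪ M with hN
    have hBfr : ModelsOf sat B ∈ FRsets sat := ⟨B, hB, rfl⟩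
    by_cases hNfr : N ∈ FRsets sat
    · exact ⟨N, hNfr, subset_rfl, fun ⟨Y, _, hNY, hYN⟩ => hYN.not_subset hNY⟩
    rcases h N with hNfr' | ⟨X, hX, hNX, hmin⟩ | hno
    · exact absurd hNfr' hNfr
    · rcases hX with hX | hX
      · refine ⟨X, hX, hNX.subset, ?_⟩
        rintro ⟨Y, hY, hNY, hYX⟩
        rcases eq_or_ne Y N with rfl | hne
        · exact hNfr hY
        · exact hmin ⟨Y, Or.inl hY, ⟨hNY, fun he => hne (le_antisymm he hNY)⟩, hYX⟩
      · exact absurd (hX ▸ hNX) (lt_irrefl _)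
    · exact absurd ⟨ModelsOf sat B, hBfr, Set.subset_union_left⟩ hno
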